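/- (Lemma 2 of the paper) A two-element subsequence q ∘ q' of the sequence R_{A,B} is a maximal increasing subsequence of R_{A,B}[f(q):f(q')] if and only if ⌈i_q⌉ ≤ i_{q'}, ⌈j_q⌉ ≤ j_{q'}, and (i_{q'} − i_q) + (j_{q'} − j_q) = 1 all hold. -/

import Mathlib

/-- Formal tokens: `r i j` (weight `c - d i j`) and `rt i j` (the token `r̃(i,j)`, weight `c`). -/
inductive Tok where
  | r  (i j : ℕ) : Tok
  | rt (i j : ℕ) : Tok
deriving DecidableEq

/-- The domain of tokens: `r(i,j)` for `1 ≤ i ≤ m`, `1 ≤ j ≤ n`,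
and `r̃(i,j)` for `2 ≤ i ≤ m`, `2 ≤ j ≤ n`. -/
def TokDom (m n : ℕ) : Tok → Prop
  | .r i j  => 1 ≤ i ∧ i ≤ m ∧ 1 ≤ j ∧ j ≤ n
  | .rt i j => 2 ≤ i ∧ i ≤ m ∧ 2 ≤ j ∧ j ≤ n

/-- The position `f(q)` of a token in the sequence `R_{A,B}`. -/
def tpos (n : ℕ) : Tok → ℕ
  | .r i j  => (i - 1) * (2 * n - 1) + j
  | .rt i j => (i - 1) * (2 * n - 1) - j + 2

/-- The integer value of a token in the sequence `R_{A,B}`. -/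
def tval (m : ℕ) : Tok → ℕ
  | .r i j  => (j - 1) * (2 * m - 1) + i
  | .rt i j => (j - 1) * (2 * m - 1) - i + 2

/-- The (half-integer) row coordinate `i_q` of a token. -/
def iq : Tok → ℚ
  | .r i _  => i
  | .rt i _ => (i : ℚ) - 1/2

/-- The (half-integer) column coordinate `j_q` of a token. -/
def jq : Tok → ℚ
  | .r _ j  => j
  | .rt _ j => (j : ℚ) - 1/2

/-- The weight of a token: `c - d i j` for `r(i,j)` and `c` for `r̃(i,j)`. -/
def tw (c : ℕ) (d : ℕ → ℕ → ℕ) : Tok → ℕ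
  | .r i j => c - d i j
  | .rt _ _ => c

/-- `Q` is an increasing subsequence of the segment of `R_{A,B}` occupying
positions `pl` through `pr`: its tokens are in the domain, their positions lie in
`[pl, pr]` and strictly increase, and their values strictly increase. -/
def IncSeg (m n pl pr : ℕ) (Q : List Tok) : Prop :=
  (∀ t ∈ Q, TokDom m n t ∧ pl ≤ tpos n t ∧ tpos n t ≤ pr) ∧
    Q.Chain' fun t t' => tpos n t < tpos n t' ∧ tval m t < tval m t'

/-- `Q` is `[a:b]`-banded: every value lies in `[a, b]`. -/
def Banded (m a b : ℕ) (Q : List Tok) : Prop :=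
  ∀ t ∈ Q, a ≤ tval m t ∧ tval m t ≤ b

/-- `Q` is a maximal increasing subsequence of the segment `[pl, pr]` of `R_{A,B}`:
it is the only increasing subsequence of the segment having it as a subsequence. -/
def MaxIncSeg (m n pl pr : ℕ) (Q : List Tok) : Prop :=
  IncSeg m n pl pr Q ∧ ∀ Q', IncSeg m n pl pr Q' → Q.Sublist Q' → Q' = Q

/-- `Q` is a maximal `[a:b]`-banded increasing subsequence of the segment `[pl, pr]`. -/
def MaxBandIncSeg (m n pl pr a b : ℕ) (Q : List Tok) : Prop :=
  IncSeg m n pl pr Q ∧ Banded m a b Q ∧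
    ∀ Q', IncSeg m n pl pr Q' → Banded m a b Q' → Q.Sublist Q' → Q' = Q


-- helpers
def prow : Tok → ℕ | .r i _ => i | .rt i _ => i - 1
def poff (n : ℕ) : Tok → ℕ | .r _ j => j | .rt _ j => 2*n+1-j
def vcol : Tok → ℕ | .r _ j => j | .rt _ j => j - 1
def voff (m : ℕ) : Tok → ℕ | .r i _ => i | .rt i _ => 2*m+1-i

lemma lex_block {K a b x y : ℕ} (hx1 : 1 ≤ x) (hxK : x ≤ K) (hy1 : 1 ≤ y) (hyK : y ≤ K) :
    a*K + x < b*K + y ↔ (a < b ∨ (a = b ∧ x < y)) := by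
  constructor
  · intro h
    rcases lt_trichotomy a b with h'|h'|h'
    · exact Or.inl h'
    · subst h'; exact Or.inr ⟨rfl, by omega⟩
    · exfalso
      have h2 : (b+1)*K ≤ a*K := Nat.mul_le_mul_right K h'
      have e : (b+1)*K = b*K + K := by ring
      omega
  · rintro (h|⟨rfl,h⟩)
    · have h2 : (a+1)*K ≤ b*K := Nat.mul_le_mul_right K h
      have e : (a+1)*K = a*K + K := by ring
      omega
    · omega

lemma tpos_eq {m n : ℕ} (hn : 1 ≤ n) {t : Tok} (ht : TokDom m n t) :
    tpos n t = (prow t - 1) * (2*n-1) + poff n t := by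
  cases t with
  | r i j => rfl
  | rt i j =>
    obtain ⟨h2, hm2, hj2, hjn⟩ := ht
    simp only [tpos, prow, poff]
    obtain ⟨a, rfl⟩ : ∃ a, i = a+2 := ⟨i-2, by omega⟩
    obtain ⟨c, rfl⟩ : ∃ c, n = c+1 := ⟨n-1, by omega⟩
    have h21 : 2*(c+1)-1 = 2*c+1 := by omega
    have ha1 : a+2-1 = a+1 := by omega
    have ha2 : a+1-1 = a := by omega
    rw [h21, ha1, ha2]
    have e : (a+1)*(2*c+1) = a*(2*c+1) + (2*c+1) := by ring
    generalize hP : a*(2*c+1) = P at e ⊢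
    omega

lemma tval_eq {m n : ℕ} (hm : 1 ≤ m) {t : Tok} (ht : TokDom m n t) :
    tval m t = (vcol t - 1) * (2*m-1) + voff m t := by
  cases t with
  | r i j => rfl
  | rt i j =>
    obtain ⟨h2, hm2, hj2, hjn⟩ := ht
    simp only [tval, vcol, voff]
    obtain ⟨a, rfl⟩ : ∃ a, j = a+2 := ⟨j-2, by omega⟩
    obtain ⟨c, rfl⟩ : ∃ c, m = c+1 := ⟨m-1, by omega⟩
    have h21 : 2*(c+1)-1 = 2*c+1 := by omega
    have ha1 : a+2-1 = a+1 := by omega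
    have ha2 : a+1-1 = a := by omega
    rw [h21, ha1, ha2]
    have e : (a+1)*(2*c+1) = a*(2*c+1) + (2*c+1) := by ring
    generalize hP : a*(2*c+1) = P at e ⊢
    omega

lemma prow_bounds {m n : ℕ} {t : Tok} (ht : TokDom m n t) : 1 ≤ prow t ∧ prow t ≤ m := by
  cases t <;> simp only [prow] <;> obtain ⟨a,b,c,d⟩ := ht <;> omega

lemma poff_bounds {m n : ℕ} (hn : 1 ≤ n) {t : Tok} (ht : TokDom m n t) :
    1 ≤ poff n t ∧ poff n t ≤ 2*n-1 := by
  cases t <;> simp only [poff] <;> obtain ⟨a,b,c,d⟩ := ht <;> omega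

lemma vcol_bounds {m n : ℕ} {t : Tok} (ht : TokDom m n t) : 1 ≤ vcol t ∧ vcol t ≤ n := by
  cases t <;> simp only [vcol] <;> obtain ⟨a,b,c,d⟩ := ht <;> omega

lemma voff_bounds {m n : ℕ} (hm : 1 ≤ m) {t : Tok} (ht : TokDom m n t) :
    1 ≤ voff m t ∧ voff m t ≤ 2*m-1 := by
  cases t <;> simp only [voff] <;> obtain ⟨a,b,c,d⟩ := ht <;> omega

lemma tpos_lt_iff {m n : ℕ} (hn : 1 ≤ n) {t t' : Tok} (ht : TokDom m n t) (ht' : TokDom m n t') :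
    tpos n t < tpos n t' ↔ (prow t < prow t' ∨ (prow t = prow t' ∧ poff n t < poff n t')) := by
  obtain ⟨hb1, hb2⟩ := poff_bounds hn ht
  obtain ⟨hb3, hb4⟩ := poff_bounds hn ht'
  obtain ⟨hr1, _⟩ := prow_bounds ht
  obtain ⟨hr2, _⟩ := prow_bounds ht'
  rw [tpos_eq hn ht, tpos_eq hn ht', lex_block hb1 hb2 hb3 hb4]
  omega

lemma tval_lt_iff {m n : ℕ} (hm : 1 ≤ m) {t t' : Tok} (ht : TokDom m n t) (ht' : TokDom m n t') :
    tval m t < tval m t' ↔ (vcol t < vcol t' ∨ (vcol t = vcol t' ∧ voff m t < voff m t')) := by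
  obtain ⟨hb1, hb2⟩ := voff_bounds hm ht
  obtain ⟨hb3, hb4⟩ := voff_bounds hm ht'
  obtain ⟨hr1, _⟩ := vcol_bounds ht
  obtain ⟨hr2, _⟩ := vcol_bounds ht'
  rw [tval_eq hm ht, tval_eq hm ht', lex_block hb1 hb2 hb3 hb4]
  omega
lemma pair_sublist_decomp {α : Type*} {a b : α} :
    ∀ {L : List α}, [a, b].Sublist L → ∃ A B C, L = A ++ a :: (B ++ b :: C) := by
  intro L h
  induction L with
  | nil => simp at h
  | cons x L ih =>
    cases h with
    | cons _ h' =>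
      obtain ⟨A, B, C, rfl⟩ := ih h'
      exact ⟨x :: A, B, C, rfl⟩
    | cons_cons _ h' =>
      rw [List.singleton_sublist] at h'
      obtain ⟨B, C, rfl⟩ := List.append_of_mem h'
      exact ⟨[], B, C, rfl⟩

lemma max_pair_iff (m n : ℕ) (q q' : Tok) (hq : TokDom m n q) (hq' : TokDom m n q') :
    MaxIncSeg m n (tpos n q) (tpos n q') [q, q'] ↔
      (tpos n q < tpos n q' ∧ tval m q < tval m q' ∧
        ∀ t, TokDom m n t → tpos n q < tpos n t → tpos n t < tpos n q' →
          tval m q < tval m t → tval m t < tval m q' → False) := by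
  constructor
  · rintro ⟨⟨hmem, hch⟩, hmax⟩
    have hR : tpos n q < tpos n q' ∧ tval m q < tval m q' := by
      simpa [List.Chain'] using hch
    refine ⟨hR.1, hR.2, ?_⟩
    intro t ht hp1 hp2 hv1 hv2
    have hinc : IncSeg m n (tpos n q) (tpos n q') [q, t, q'] := by
      constructor
      · intro x hx
        simp only [List.mem_cons, List.not_mem_nil, or_false] at hx
        rcases hx with rfl | rfl | rfl
        · exact ⟨hq, le_refl _, le_of_lt hR.1⟩
        · exact ⟨ht, le_of_lt hp1, le_of_lt hp2⟩
        · exact ⟨hq', le_of_lt hR.1, le_refl _⟩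
      · simp only [List.Chain', List.isChain_cons_cons, List.isChain_singleton, and_true]
        exact ⟨⟨hp1, hv1⟩, ⟨hp2, hv2⟩⟩
    have hsub : [q, q'].Sublist [q, t, q'] :=
      List.Sublist.cons₂ q (List.sublist_cons_self t [q'])
    have := hmax _ hinc hsub
    simp at this
  · rintro ⟨hp, hv, hnb⟩
    constructor
    · constructor
      · intro x hx
        simp only [List.mem_cons, List.not_mem_nil, or_false] at hx
        rcases hx with rfl | rfl
        · exact ⟨hq, le_refl _, le_of_lt hp⟩
        · exact ⟨hq', le_of_lt hp, le_refl _⟩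
      · simp only [List.Chain', List.isChain_cons_cons, List.isChain_singleton, and_true]
        exact ⟨hp, hv⟩
    · rintro Q' ⟨hmem, hch⟩ hsub
      have htr : IsTrans Tok (fun t t' => tpos n t < tpos n t' ∧ tval m t < tval m t') :=
        ⟨fun a b c h1 h2 => ⟨h1.1.trans h2.1, h1.2.trans h2.2⟩⟩
      have hpw : Q'.Pairwise (fun t t' => tpos n t < tpos n t' ∧ tval m t < tval m t') := by
        haveI : Trans (fun t t' : Tok => tpos n t < tpos n t' ∧ tval m t < tval m t')
            (fun t t' : Tok => tpos n t < tpos n t' ∧ tval m t < tval m t')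
            (fun t t' : Tok => tpos n t < tpos n t' ∧ tval m t < tval m t') :=
          ⟨fun h1 h2 => ⟨h1.1.trans h2.1, h1.2.trans h2.2⟩⟩
        exact List.isChain_iff_pairwise.mp hch
      obtain ⟨A, B, C, rfl⟩ := pair_sublist_decomp hsub
      -- A = []
      have hA : A = [] := by
        rcases A with _ | ⟨x, A⟩
        · rfl
        · exfalso
          have hx : (fun t t' => tpos n t < tpos n t' ∧ tval m t < tval m t') x q := by
            have := List.pairwise_append.mp hpw
            exact (this.2.2 x (by simp) q (by simp))
          have hb := hmem x (by simp)
          omega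
      subst hA
      simp only [List.nil_append] at hpw hmem ⊢
      have hpw' := List.pairwise_cons.mp hpw
      have hC : C = [] := by
        rcases C with _ | ⟨x, C⟩
        · rfl
        · exfalso
          have hx : (fun t t' => tpos n t < tpos n t' ∧ tval m t < tval m t') q' x := by
            have h2 := List.pairwise_append.mp hpw'.2
            exact (List.pairwise_cons.mp h2.2.1).1 x (by simp)
          have hb := hmem x (by simp)
          omega
      subst hC
      have hB : B = [] := by
        rcases B with _ | ⟨x, B⟩
        · rfl
        · exfalso
          have hqx : (fun t t' => tpos n t < tpos n t' ∧ tval m t < tval m t') q x :=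
            hpw'.1 x (by simp)
          have hxq' : (fun t t' => tpos n t < tpos n t' ∧ tval m t < tval m t') x q' := by
            have h2 := List.pairwise_append.mp hpw'.2
            exact h2.2.2 x (by simp) q' (by simp)
          have ht := hmem x (by simp)
          exact hnb x ht.1 hqx.1 hxq'.1 hqx.2 hxq'.2
      subst hB
      rfl
lemma ceil_nat (a : ℕ) : ⌈(a:ℚ)⌉ = (a:ℤ) := Int.ceil_natCast a

lemma ceil_half (a : ℕ) : ⌈(a:ℚ) - 1/2⌉ = (a:ℤ) := by
  rw [Int.ceil_eq_iff]
  constructor <;> push_cast <;> linarith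

lemma cast_le_iff (a b : ℕ) : (a:ℚ) ≤ (b:ℚ) ↔ a ≤ b := Nat.cast_le

lemma cast_le_half_iff (a b : ℕ) : (a:ℚ) ≤ (b:ℚ) - 1/2 ↔ a < b := by
  constructor
  · intro h; exact_mod_cast (show (a:ℚ) < b by linarith)
  · intro h; have h2 : ((a:ℚ)+1) ≤ b := by exact_mod_cast h
    linarith

lemma sum_rr (i j i' j' : ℕ) : ((i':ℚ) - i) + ((j':ℚ) - j) = 1 ↔ i' + j' = i + j + 1 := by
  constructor
  · intro h
    have h2 : (i':ℚ) + j' = i + j + 1 := by linarith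
    exact_mod_cast h2
  · intro h
    have h2 : (i':ℚ) + j' = ((i + j + 1 : ℕ) : ℚ) := by exact_mod_cast h
    push_cast at h2; linarith

lemma sum_rrt (i j i' j' : ℕ) :
    ((i':ℚ) - 1/2 - i) + ((j':ℚ) - 1/2 - j) = 1 ↔ i' + j' = i + j + 2 := by
  constructor
  · intro h
    have h2 : (i':ℚ) + j' = i + j + 2 := by linarith
    exact_mod_cast h2
  · intro h
    have h2 : (i':ℚ) + j' = ((i + j + 2 : ℕ) : ℚ) := by exact_mod_cast h
    push_cast at h2; linarith

lemma sum_rtr (i j i' j' : ℕ) :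
    ((i':ℚ) - ((i:ℚ) - 1/2)) + ((j':ℚ) - ((j:ℚ) - 1/2)) = 1 ↔ i' + j' = i + j := by
  constructor
  · intro h
    have h2 : (i':ℚ) + j' = i + j := by linarith
    exact_mod_cast h2
  · intro h
    have h2 : (i':ℚ) + j' = ((i + j : ℕ) : ℚ) := by exact_mod_cast h
    push_cast at h2; linarith

lemma sum_rtrt (i j i' j' : ℕ) :
    ((i':ℚ) - 1/2 - ((i:ℚ) - 1/2)) + ((j':ℚ) - 1/2 - ((j:ℚ) - 1/2)) = 1 ↔ i' + j' = i + j + 1 := by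
  constructor
  · intro h
    have h2 : (i':ℚ) + j' = i + j + 1 := by linarith
    exact_mod_cast h2
  · intro h
    have h2 : (i':ℚ) + j' = ((i + j + 1 : ℕ) : ℚ) := by exact_mod_cast h
    push_cast at h2; linarith

lemma mk_between {m n : ℕ} (hm : 1 ≤ m) (hn : 1 ≤ n) {q q' : Tok}
    (hq : TokDom m n q) (hq' : TokDom m n q')
    (hnb : ∀ t, TokDom m n t → tpos n q < tpos n t → tpos n t < tpos n q' →
      tval m q < tval m t → tval m t < tval m q' → False)
    (t : Tok) (ht : TokDom m n t)
    (h1 : prow q < prow t ∨ (prow q = prow t ∧ poff n q < poff n t))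
    (h2 : prow t < prow q' ∨ (prow t = prow q' ∧ poff n t < poff n q'))
    (h3 : vcol q < vcol t ∨ (vcol q = vcol t ∧ voff m q < voff m t))
    (h4 : vcol t < vcol q' ∨ (vcol t = vcol q' ∧ voff m t < voff m q')) : False :=
  hnb t ht ((tpos_lt_iff hn hq ht).mpr h1) ((tpos_lt_iff hn ht hq').mpr h2)
    ((tval_lt_iff hm hq ht).mpr h3) ((tval_lt_iff hm ht hq').mpr h4)
theorem two_element_maximal_iff (m n : ℕ) (hm : 1 ≤ m) (hn : 1 ≤ n)
    (q q' : Tok) (hq : TokDom m n q) (hq' : TokDom m n q') :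
    MaxIncSeg m n (tpos n q) (tpos n q') [q, q'] ↔
      ((⌈iq q⌉ : ℚ) ≤ iq q' ∧ (⌈jq q⌉ : ℚ) ≤ jq q' ∧
        (iq q' - iq q) + (jq q' - jq q) = 1) := by
  rw [max_pair_iff m n q q' hq hq']
  have hbq := hq; have hbq' := hq'
  cases q with
  | r i j =>
    obtain ⟨hi1, him, hj1, hjn⟩ := hbq
    cases q' with
    | r i' j' =>
      obtain ⟨hi1', him', hj1', hjn'⟩ := hbq'
      simp only [iq, jq, ceil_nat, Int.cast_natCast]
      rw [cast_le_iff, cast_le_iff, sum_rr]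
      constructor
      · rintro ⟨hp, hv, hnb⟩
        rw [tpos_lt_iff hn hq hq'] at hp
        rw [tval_lt_iff hm hq hq'] at hv
        simp only [prow, poff, vcol, voff] at hp hv
        refine ⟨by omega, by omega, ?_⟩
        by_contra hne
        rcases (by omega : j < j' ∨ (j = j' ∧ i + 2 ≤ i')) with hc | hc
        · exact mk_between hm hn hq hq' hnb (.r i (j+1))
            (by simp only [TokDom]; omega)
            (by simp only [prow, poff, true_and, and_true]; omega) (by simp only [prow, poff, true_and, and_true]; omega)
            (by simp only [vcol, voff, true_and, and_true]; omega) (by simp only [vcol, voff, true_and, and_true]; omega)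
        · exact mk_between hm hn hq hq' hnb (.r (i+1) j)
            (by simp only [TokDom]; omega)
            (by simp only [prow, poff, true_and, and_true]; omega) (by simp only [prow, poff, true_and, and_true]; omega)
            (by simp only [vcol, voff, true_and, and_true]; omega) (by simp only [vcol, voff, true_and, and_true]; omega)
      · rintro ⟨h1, h2, h3⟩
        refine ⟨?_, ?_, ?_⟩
        · rw [tpos_lt_iff hn hq hq']; simp only [prow, poff, true_and, and_true]; omega
        · rw [tval_lt_iff hm hq hq']; simp only [vcol, voff, true_and, and_true]; omega
        · intro t htd hp1 hp2 hv1 hv2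
          rw [tpos_lt_iff hn hq htd] at hp1
          rw [tpos_lt_iff hn htd hq'] at hp2
          rw [tval_lt_iff hm hq htd] at hv1
          rw [tval_lt_iff hm htd hq'] at hv2
          have hbt := htd
          cases t <;> simp only [TokDom] at hbt <;>
            simp only [prow, poff, vcol, voff] at hp1 hp2 hv1 hv2 <;> omega
    | rt i' j' =>
      obtain ⟨hi1', him', hj1', hjn'⟩ := hbq'
      simp only [iq, jq, ceil_nat, Int.cast_natCast]
      rw [cast_le_half_iff, cast_le_half_iff, sum_rrt]
      constructor
      · rintro ⟨hp, hv, hnb⟩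
        rw [tpos_lt_iff hn hq hq'] at hp
        rw [tval_lt_iff hm hq hq'] at hv
        simp only [prow, poff, vcol, voff] at hp hv
        refine ⟨by omega, by omega, ?_⟩
        by_contra hne
        rcases (by omega : j + 2 ≤ j' ∨ (j' = j + 1 ∧ i + 2 ≤ i')) with hc | hc
        · exact mk_between hm hn hq hq' hnb (.r i (j+1))
            (by simp only [TokDom]; omega)
            (by simp only [prow, poff, true_and, and_true]; omega) (by simp only [prow, poff, true_and, and_true]; omega)
            (by simp only [vcol, voff, true_and, and_true]; omega) (by simp only [vcol, voff, true_and, and_true]; omega)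
        · exact mk_between hm hn hq hq' hnb (.r (i+1) j)
            (by simp only [TokDom]; omega)
            (by simp only [prow, poff, true_and, and_true]; omega) (by simp only [prow, poff, true_and, and_true]; omega)
            (by simp only [vcol, voff, true_and, and_true]; omega) (by simp only [vcol, voff, true_and, and_true]; omega)
      · rintro ⟨h1, h2, h3⟩
        refine ⟨?_, ?_, ?_⟩
        · rw [tpos_lt_iff hn hq hq']; simp only [prow, poff, true_and, and_true]; omega
        · rw [tval_lt_iff hm hq hq']; simp only [vcol, voff, true_and, and_true]; omega
        · intro t htd hp1 hp2 hv1 hv2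
          rw [tpos_lt_iff hn hq htd] at hp1
          rw [tpos_lt_iff hn htd hq'] at hp2
          rw [tval_lt_iff hm hq htd] at hv1
          rw [tval_lt_iff hm htd hq'] at hv2
          have hbt := htd
          cases t <;> simp only [TokDom] at hbt <;>
            simp only [prow, poff, vcol, voff] at hp1 hp2 hv1 hv2 <;> omega
  | rt i j =>
    obtain ⟨hi1, him, hj1, hjn⟩ := hbq
    cases q' with
    | r i' j' =>
      obtain ⟨hi1', him', hj1', hjn'⟩ := hbq'
      simp only [iq, jq, ceil_half, Int.cast_natCast]
      rw [cast_le_iff, cast_le_iff, sum_rtr]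
      constructor
      · rintro ⟨hp, hv, hnb⟩
        rw [tpos_lt_iff hn hq hq'] at hp
        rw [tval_lt_iff hm hq hq'] at hv
        simp only [prow, poff, vcol, voff] at hp hv
        refine ⟨by omega, by omega, ?_⟩
        by_contra hne
        exact mk_between hm hn hq hq' hnb (.r i j)
            (by simp only [TokDom]; omega)
            (by simp only [prow, poff, true_and, and_true]; omega) (by simp only [prow, poff, true_and, and_true]; omega)
            (by simp only [vcol, voff, true_and, and_true]; omega) (by simp only [vcol, voff, true_and, and_true]; omega)
      · rintro ⟨h1, h2, h3⟩
        refine ⟨?_, ?_, ?_⟩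
        · rw [tpos_lt_iff hn hq hq']; simp only [prow, poff, true_and, and_true]; omega
        · rw [tval_lt_iff hm hq hq']; simp only [vcol, voff, true_and, and_true]; omega
        · intro t htd hp1 hp2 hv1 hv2
          rw [tpos_lt_iff hn hq htd] at hp1
          rw [tpos_lt_iff hn htd hq'] at hp2
          rw [tval_lt_iff hm hq htd] at hv1
          rw [tval_lt_iff hm htd hq'] at hv2
          have hbt := htd
          cases t <;> simp only [TokDom] at hbt <;>
            simp only [prow, poff, vcol, voff] at hp1 hp2 hv1 hv2 <;> omega
    | rt i' j' =>
      obtain ⟨hi1', him', hj1', hjn'⟩ := hbq'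
      simp only [iq, jq, ceil_half, Int.cast_natCast]
      rw [cast_le_half_iff, cast_le_half_iff, sum_rtrt]
      constructor
      · rintro ⟨hp, hv, hnb⟩
        rw [tpos_lt_iff hn hq hq'] at hp
        rw [tval_lt_iff hm hq hq'] at hv
        simp only [prow, poff, vcol, voff] at hp hv
        exact absurd (mk_between hm hn hq hq' hnb (.r i j)
            (by simp only [TokDom]; omega)
            (by simp only [prow, poff, true_and, and_true]; omega) (by simp only [prow, poff, true_and, and_true]; omega)
            (by simp only [vcol, voff, true_and, and_true]; omega) (by simp only [vcol, voff, true_and, and_true]; omega)) (by simp)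
      · rintro ⟨h1, h2, h3⟩
        exact absurd h3 (by omega)
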